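/- Let S : [A₀, ∞) → [0, ∞) be a function with S(A) → 0 as A → ∞. Suppose there exist α, β ∈ (0,1) and p, ω > 0 with pα + β > 1, and a constant C > 0, such that S(A) ≤ C (S(A^β) S(A^α)^p + A^{-ω}) for all sufficiently large A. Then there exists a constant C' such that S(A) ≤ C' A^{-ω} for all sufficiently large A. -/

import Mathlib

open Filter

private lemma decay_mono (S : ℝ → ℝ) (σ σ' : ℝ) (hσσ : σ ≤ σ')
    (hd : ∃ K, 0 < K ∧ ∀ᶠ A in atTop, S A ≤ K * A ^ (-σ')) :
    ∃ K, 0 < K ∧ ∀ᶠ A in atTop, S A ≤ K * A ^ (-σ) := by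
  obtain ⟨K, hK, hKe⟩ := hd
  refine ⟨K, hK, ?_⟩
  filter_upwards [hKe, eventually_ge_atTop (1 : ℝ)] with A h1 h2
  refine h1.trans ?_
  exact mul_le_mul_of_nonneg_left
    (Real.rpow_le_rpow_of_exponent_le h2 (by linarith)) hK.le

private lemma decay_step (S : ℝ → ℝ) (α β p ω C σ : ℝ)
    (hα : 0 < α) (hβ : 0 < β) (hp : 0 < p) (hω : 0 < ω) (hC : 0 < C) (hσ : 0 < σ)
    (hS0ev : ∀ᶠ A in atTop, 0 ≤ S A)
    (hrec : ∀ᶠ A in atTop, S A ≤ C * (S (A ^ β) * S (A ^ α) ^ p + A ^ (-ω)))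
    (h : ∃ K, 0 < K ∧ ∀ᶠ A in atTop, S A ≤ K * A ^ (-σ)) :
    ∃ K, 0 < K ∧ ∀ᶠ A in atTop, S A ≤ K * A ^ (-(min ((p * α + β) * σ) ω)) := by
  obtain ⟨K, hK, hKe⟩ := h
  have hKp : (0:ℝ) < K ^ p := Real.rpow_pos_of_pos hK p
  refine ⟨C * (K * K ^ p) + C, by positivity, ?_⟩
  have htα : Tendsto (fun A : ℝ => A ^ α) atTop atTop := tendsto_rpow_atTop hα
  have htβ : Tendsto (fun A : ℝ => A ^ β) atTop atTop := tendsto_rpow_atTop hβ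
  filter_upwards [hrec, htα.eventually hKe, htβ.eventually hKe,
    htα.eventually hS0ev, htβ.eventually hS0ev, eventually_ge_atTop (1 : ℝ)]
    with A h1 h2 h3 h4 h5 h6
  have hA0 : (0:ℝ) < A := lt_of_lt_of_le one_pos h6
  have step1 : S (A ^ β) * S (A ^ α) ^ p ≤ (K * (A ^ β) ^ (-σ)) * (K * (A ^ α) ^ (-σ)) ^ p := by
    have hαp : S (A ^ α) ^ p ≤ (K * (A ^ α) ^ (-σ)) ^ p :=
      Real.rpow_le_rpow h4 h2 hp.le
    exact mul_le_mul h3 hαp (Real.rpow_nonneg h4 p) (by positivity)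
  have e1 : (A ^ β) ^ (-σ) = A ^ (β * (-σ)) := (Real.rpow_mul hA0.le β (-σ)).symm
  have e2 : (A ^ α) ^ (-σ) = A ^ (α * (-σ)) := (Real.rpow_mul hA0.le α (-σ)).symm
  have e3 : (K * A ^ (α * (-σ))) ^ p = K ^ p * A ^ (α * (-σ) * p) := by
    rw [Real.mul_rpow hK.le (Real.rpow_nonneg hA0.le _), ← Real.rpow_mul hA0.le]
  have expand : (K * (A ^ β) ^ (-σ)) * (K * (A ^ α) ^ (-σ)) ^ p
      = K * K ^ p * A ^ (-((p * α + β) * σ)) := by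
    rw [e1, e2, e3,
      show K * A ^ (β * (-σ)) * (K ^ p * A ^ (α * (-σ) * p))
        = K * K ^ p * (A ^ (β * (-σ)) * A ^ (α * (-σ) * p)) by ring,
      ← Real.rpow_add hA0]
    congr 1
    ring
  have hm1 : A ^ (-((p * α + β) * σ)) ≤ A ^ (-(min ((p * α + β) * σ) ω)) :=
    Real.rpow_le_rpow_of_exponent_le h6 (neg_le_neg (min_le_left _ _))
  have hm2 : A ^ (-ω) ≤ A ^ (-(min ((p * α + β) * σ) ω)) :=
    Real.rpow_le_rpow_of_exponent_le h6 (neg_le_neg (min_le_right _ _))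
  have t1 : S (A ^ β) * S (A ^ α) ^ p ≤ K * K ^ p * A ^ (-(min ((p * α + β) * σ) ω)) := by
    refine (step1.trans_eq expand).trans ?_
    exact mul_le_mul_of_nonneg_left hm1 (by positivity)
  calc S A ≤ C * (S (A ^ β) * S (A ^ α) ^ p + A ^ (-ω)) := h1
    _ ≤ C * (K * K ^ p * A ^ (-(min ((p * α + β) * σ) ω))
          + A ^ (-(min ((p * α + β) * σ) ω))) :=
        mul_le_mul_of_nonneg_left (add_le_add t1 hm2) hC.le
    _ = (C * (K * K ^ p) + C) * A ^ (-(min ((p * α + β) * σ) ω)) := by ring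

set_option maxHeartbeats 1000000 in
private lemma decay_initial (A₀ : ℝ) (hA₀ : 1 < A₀) (S : ℝ → ℝ)
    (hS0 : ∀ A, A₀ ≤ A → 0 ≤ S A)
    (hlim : Tendsto S atTop (nhds 0))
    (α β p ω C : ℝ) (hα : α ∈ Set.Ioo (0 : ℝ) 1) (hβ : β ∈ Set.Ioo (0 : ℝ) 1)
    (hp : 0 < p) (hω : 0 < ω) (hC : 0 < C) (hpαβ : 1 < p * α + β)
    (hrec : ∀ᶠ A in atTop, S A ≤ C * (S (A ^ β) * S (A ^ α) ^ p + A ^ (-ω))) :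
    ∃ θ K : ℝ, 0 < θ ∧ θ ≤ ω ∧ 0 < K ∧ ∀ᶠ A in atTop, S A ≤ K * A ^ (-θ) := by
  obtain ⟨hα0, hα1⟩ := hα
  obtain ⟨hβ0, hβ1⟩ := hβ
  set μ := min α β with hμdef
  set γ := max α β with hγdef
  have hμ0 : 0 < μ := lt_min hα0 hβ0
  have hγ1 : γ < 1 := max_lt hα1 hβ1
  have hγ0 : 0 < γ := lt_of_lt_of_le hα0 (le_max_left _ _)
  set L := p * α + β with hLdef
  have hL1 : 1 < L := hpαβ
  set K := max (2 * C) 1 with hKdef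
  have hK1 : (1:ℝ) ≤ K := le_max_right _ _
  have hK0 : (0:ℝ) < K := lt_of_lt_of_le one_pos hK1
  have hKC : 2 * C ≤ K := le_max_left _ _
  have hKp0 : (0:ℝ) < K ^ p := Real.rpow_pos_of_pos hK0 p
  set c := max (Real.log (2 * C * K ^ p) / (L - 1)) 1 with hcdef
  have hc1 : (1:ℝ) ≤ c := le_max_right _ _
  have hc0 : (0:ℝ) < c := lt_of_lt_of_le one_pos hc1
  have h2CKp : (0:ℝ) < 2 * C * K ^ p := by positivity
  have hkey : C * K ^ p * Real.exp (-((L - 1) * c)) ≤ 1 / 2 := by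
    have hL0 : (0:ℝ) < L - 1 := by linarith
    have h1 : Real.log (2 * C * K ^ p) ≤ (L - 1) * c := by
      have h := le_max_left (Real.log (2 * C * K ^ p) / (L - 1)) 1
      calc Real.log (2 * C * K ^ p)
          = (L - 1) * (Real.log (2 * C * K ^ p) / (L - 1)) := by field_simp
        _ ≤ (L - 1) * c := mul_le_mul_of_nonneg_left h hL0.le
    have h2 : Real.exp (-((L - 1) * c)) ≤ (2 * C * K ^ p)⁻¹ := by
      rw [show (2 * C * K ^ p)⁻¹ = Real.exp (-(Real.log (2 * C * K ^ p))) by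
        rw [Real.exp_neg, Real.exp_log h2CKp]]
      exact Real.exp_le_exp.2 (by linarith)
    calc C * K ^ p * Real.exp (-((L - 1) * c))
        ≤ C * K ^ p * (2 * C * K ^ p)⁻¹ := mul_le_mul_of_nonneg_left h2 (by positivity)
      _ = 1 / 2 := by
          have h1 : C ≠ 0 := hC.ne'
          have h2 : K ^ p ≠ 0 := hKp0.ne'
          field_simp
  have hε0 : (0:ℝ) < K * Real.exp (-(c / μ)) := by positivity
  have hsmall : ∀ᶠ A in atTop, S A < K * Real.exp (-(c / μ)) :=
    hlim.eventually_lt_const hε0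
  obtain ⟨A₁, hA₁⟩ := eventually_atTop.1 (hrec.and hsmall)
  set M := max A₁ A₀ with hMdef
  have hM0 : (0:ℝ) < M := lt_of_lt_of_le (by linarith : (0:ℝ) < A₀) (le_max_right _ _)
  set X := max (max (Real.log M) (c / ω)) 1 with hXdef
  have hX1 : (1:ℝ) ≤ X := le_max_right _ _
  have hX0 : (0:ℝ) < X := lt_of_lt_of_le one_pos hX1
  have hXM : Real.log M ≤ X := le_trans (le_max_left _ _) (le_max_left _ _)
  have hXcω : c / ω ≤ X := le_trans (le_max_right _ _) (le_max_left _ _)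
  have hexpX : M ≤ Real.exp X := by
    rw [← Real.exp_log hM0]; exact Real.exp_le_exp.2 hXM
  set θ := c / X with hθdef
  have hθ0 : 0 < θ := div_pos hc0 hX0
  have hθX : θ * X = c := div_mul_cancel₀ c hX0.ne'
  have hθω : θ ≤ ω := by
    rw [hθdef, div_le_iff₀ hX0]
    calc c = ω * (c / ω) := by field_simp
      _ ≤ ω * X := mul_le_mul_of_nonneg_left hXcω hω.le
  have hA₁exp : ∀ x : ℝ, X ≤ x → A₁ ≤ Real.exp x := fun x hx =>
    le_trans (le_trans (le_max_left _ _) hexpX) (Real.exp_le_exp.2 hx)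
  have hA₀exp : ∀ x : ℝ, X ≤ x → A₀ ≤ Real.exp x := fun x hx =>
    le_trans (le_trans (le_max_right _ _) hexpX) (Real.exp_le_exp.2 hx)
  have main : ∀ n : ℕ, ∀ x : ℝ, X ≤ x → x * γ ^ n ≤ X / μ →
      S (Real.exp x) ≤ K * Real.exp (-(θ * x)) := by
    intro n
    induction n with
    | zero =>
      intro x hx1 hx2
      rw [pow_zero, mul_one] at hx2
      have hS : S (Real.exp x) < K * Real.exp (-(c / μ)) := (hA₁ _ (hA₁exp x hx1)).2
      refine hS.le.trans ?_
      have hmono : -(c / μ) ≤ -(θ * x) := by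
        rw [neg_le_neg_iff]
        calc θ * x ≤ θ * (X / μ) := mul_le_mul_of_nonneg_left hx2 hθ0.le
          _ = c / μ := by rw [mul_div_assoc', hθX]
      exact mul_le_mul_of_nonneg_left (Real.exp_le_exp.2 hmono) hK0.le
    | succ n ih =>
      intro x hx1 hx2
      by_cases hcase : x * γ ^ n ≤ X / μ
      · exact ih x hx1 hcase
      push_neg at hcase
      have hx0 : 0 < x := lt_of_lt_of_le one_pos (hX1.trans hx1)
      have hγn1 : γ ^ n ≤ 1 := pow_le_one₀ hγ0.le hγ1.le
      have hxXμ : X / μ < x :=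
        lt_of_lt_of_le hcase (mul_le_of_le_one_right hx0.le hγn1)
      have hμx : X ≤ μ * x := by
        rw [div_lt_iff₀ hμ0] at hxXμ; linarith [mul_comm μ x]
      have hαxX : X ≤ α * x :=
        le_trans hμx (mul_le_mul_of_nonneg_right (min_le_left _ _) hx0.le)
      have hβxX : X ≤ β * x :=
        le_trans hμx (mul_le_mul_of_nonneg_right (min_le_right _ _) hx0.le)
      have hγpos : (0:ℝ) ≤ γ ^ n := pow_nonneg hγ0.le n
      have hαxγ : (α * x) * γ ^ n ≤ X / μ := by
        calc (α * x) * γ ^ n ≤ (γ * x) * γ ^ n :=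
              mul_le_mul_of_nonneg_right
                (mul_le_mul_of_nonneg_right (le_max_left α β) hx0.le) hγpos
          _ = x * γ ^ (n + 1) := by ring
          _ ≤ X / μ := hx2
      have hβxγ : (β * x) * γ ^ n ≤ X / μ := by
        calc (β * x) * γ ^ n ≤ (γ * x) * γ ^ n :=
              mul_le_mul_of_nonneg_right
                (mul_le_mul_of_nonneg_right (le_max_right α β) hx0.le) hγpos
          _ = x * γ ^ (n + 1) := by ring
          _ ≤ X / μ := hx2
      have ihα := ih (α * x) hαxX hαxγ
      have ihβ := ih (β * x) hβxX hβxγ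
      have hrecx := (hA₁ _ (hA₁exp x hx1)).1
      rw [show Real.exp x ^ β = Real.exp (β * x) by rw [← Real.exp_mul, mul_comm],
          show Real.exp x ^ α = Real.exp (α * x) by rw [← Real.exp_mul, mul_comm],
          show Real.exp x ^ (-ω) = Real.exp (-(ω * x)) by
            rw [← Real.exp_mul]; congr 1; ring] at hrecx
      have hSα0 : 0 ≤ S (Real.exp (α * x)) := hS0 _ (hA₀exp _ hαxX)
      have hpow : S (Real.exp (α * x)) ^ p ≤ (K * Real.exp (-(θ * (α * x)))) ^ p :=
        Real.rpow_le_rpow hSα0 ihα hp.le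
      have hpow2 : (K * Real.exp (-(θ * (α * x)))) ^ p
          = K ^ p * Real.exp (-(θ * (α * x)) * p) := by
        rw [Real.mul_rpow hK0.le (Real.exp_nonneg _), ← Real.exp_mul]
      have hprod : S (Real.exp (β * x)) * S (Real.exp (α * x)) ^ p
          ≤ K * K ^ p * Real.exp (-(θ * L * x)) := by
        have h1 : S (Real.exp (β * x)) * S (Real.exp (α * x)) ^ p
            ≤ (K * Real.exp (-(θ * (β * x)))) * (K ^ p * Real.exp (-(θ * (α * x)) * p)) := by
          rw [← hpow2]
          exact mul_le_mul ihβ hpow (Real.rpow_nonneg hSα0 p) (by positivity)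
        refine h1.trans_eq ?_
        rw [show K * Real.exp (-(θ * (β * x))) * (K ^ p * Real.exp (-(θ * (α * x)) * p))
            = K * K ^ p * (Real.exp (-(θ * (β * x))) * Real.exp (-(θ * (α * x)) * p)) by ring,
          ← Real.exp_add]
        congr 2
        rw [hLdef]; ring
      have e1 : Real.exp (-(θ * L * x))
          = Real.exp (-(θ * x)) * Real.exp (-(θ * (L - 1) * x)) := by
        rw [← Real.exp_add]; congr 1; ring
      have e2 : Real.exp (-(θ * (L - 1) * x)) ≤ Real.exp (-((L - 1) * c)) := by
        apply Real.exp_le_exp.2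
        rw [neg_le_neg_iff]
        have : (L - 1) * c = θ * (L - 1) * X := by rw [← hθX]; ring
        rw [this, show θ * (L - 1) * X = (θ * (L - 1)) * X by ring,
          show θ * (L - 1) * x = (θ * (L - 1)) * x by ring]
        have h01 : 0 ≤ θ * (L - 1) := mul_nonneg hθ0.le (by linarith)
        exact mul_le_mul_of_nonneg_left hx1 h01
      have e3 : Real.exp (-(ω * x)) ≤ Real.exp (-(θ * x)) :=
        Real.exp_le_exp.2 (neg_le_neg (mul_le_mul_of_nonneg_right hθω hx0.le))
      have hhalf : C * K ^ p * Real.exp (-(θ * (L - 1) * x)) ≤ 1 / 2 :=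
        le_trans (mul_le_mul_of_nonneg_left e2 (by positivity)) hkey
      have ht1 : C * (K * K ^ p * Real.exp (-(θ * L * x)))
          ≤ 1 / 2 * (K * Real.exp (-(θ * x))) := by
        rw [e1]
        calc C * (K * K ^ p * (Real.exp (-(θ * x)) * Real.exp (-(θ * (L - 1) * x))))
            = (C * K ^ p * Real.exp (-(θ * (L - 1) * x))) * (K * Real.exp (-(θ * x))) := by
              ring
          _ ≤ 1 / 2 * (K * Real.exp (-(θ * x))) :=
              mul_le_mul_of_nonneg_right hhalf (by positivity)
      have ht2 : C * Real.exp (-(ω * x)) ≤ 1 / 2 * (K * Real.exp (-(θ * x))) := by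
        calc C * Real.exp (-(ω * x)) ≤ C * Real.exp (-(θ * x)) :=
              mul_le_mul_of_nonneg_left e3 hC.le
          _ ≤ 1 / 2 * (K * Real.exp (-(θ * x))) := by
              rw [← mul_assoc]
              exact mul_le_mul_of_nonneg_right
                (by linarith : C ≤ 1 / 2 * K) (Real.exp_nonneg _)
      calc S (Real.exp x)
          ≤ C * (S (Real.exp (β * x)) * S (Real.exp (α * x)) ^ p + Real.exp (-(ω * x))) :=
            hrecx
        _ ≤ C * (K * K ^ p * Real.exp (-(θ * L * x)) + Real.exp (-(ω * x))) :=
            mul_le_mul_of_nonneg_left (add_le_add_left hprod _) hC.le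
        _ = C * (K * K ^ p * Real.exp (-(θ * L * x))) + C * Real.exp (-(ω * x)) := by ring
        _ ≤ K * Real.exp (-(θ * x)) := by linarith
  have final : ∀ x : ℝ, X ≤ x → S (Real.exp x) ≤ K * Real.exp (-(θ * x)) := by
    intro x hx
    have hx0 : 0 < x := lt_of_lt_of_le one_pos (hX1.trans hx)
    have htend : Tendsto (fun n : ℕ => γ ^ n) atTop (nhds 0) :=
      tendsto_pow_atTop_nhds_zero_of_lt_one hγ0.le hγ1
    have hpos : (0:ℝ) < (X / μ) / x := by positivity
    obtain ⟨n, hn⟩ := (htend.eventually_lt_const hpos).exists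
    refine main n x hx ?_
    rw [lt_div_iff₀ hx0] at hn
    calc x * γ ^ n = γ ^ n * x := mul_comm _ _
      _ ≤ X / μ := hn.le
  refine ⟨θ, K, hθ0, hθω, hK0, ?_⟩
  filter_upwards [eventually_ge_atTop (Real.exp X)] with A hAe
  have hA0 : 0 < A := lt_of_lt_of_le (Real.exp_pos X) hAe
  have hXlog : X ≤ Real.log A := by
    rw [Real.le_log_iff_exp_le hA0]; exact hAe
  have hfin := final (Real.log A) hXlog
  rw [Real.exp_log hA0] at hfin
  refine hfin.trans_eq ?_
  congr 1
  rw [Real.rpow_def_of_pos hA0]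
  congr 1
  ring

theorem decay_lemma (A₀ : ℝ) (hA₀ : 1 < A₀) (S : ℝ → ℝ)
    (hS0 : ∀ A, A₀ ≤ A → 0 ≤ S A)
    (hlim : Tendsto S atTop (nhds 0))
    (α β p ω C : ℝ) (hα : α ∈ Set.Ioo (0 : ℝ) 1) (hβ : β ∈ Set.Ioo (0 : ℝ) 1)
    (hp : 0 < p) (hω : 0 < ω) (hC : 0 < C) (hpαβ : 1 < p * α + β)
    (hrec : ∀ᶠ A in atTop, S A ≤ C * (S (A ^ β) * S (A ^ α) ^ p + A ^ (-ω))) :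
    ∃ C' : ℝ, ∀ᶠ A in atTop, S A ≤ C' * A ^ (-ω) := by
  have hS0ev : ∀ᶠ A in atTop, 0 ≤ S A := eventually_atTop.2 ⟨A₀, hS0⟩
  obtain ⟨θ, K₀, hθ0, hθω, hK₀, hinit⟩ :=
    decay_initial A₀ hA₀ S hS0 hlim α β p ω C hα hβ hp hω hC hpαβ hrec
  set L := p * α + β with hLdef
  have hL1 : 1 < L := hpαβ
  have hL0 : 0 < L := by linarith
  have key : ∀ n : ℕ, ∃ K, 0 < K ∧ ∀ᶠ A in atTop, S A ≤ K * A ^ (-(min (θ * L ^ n) ω)) := by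
    intro n
    induction n with
    | zero =>
      rw [pow_zero, mul_one, min_eq_left hθω]
      exact ⟨K₀, hK₀, hinit⟩
    | succ n ih =>
      have hσ0 : 0 < min (θ * L ^ n) ω := lt_min (by positivity) hω
      have hstep := decay_step S α β p ω C (min (θ * L ^ n) ω)
        hα.1 hβ.1 hp hω hC hσ0 hS0ev hrec ih
      refine decay_mono S _ _ ?_ hstep
      rcases min_cases (θ * L ^ n) ω with ⟨heq, _⟩ | ⟨heq, hle⟩
      · rw [heq]
        refine le_min ?_ (min_le_right _ _)
        calc min (θ * L ^ (n + 1)) ω ≤ θ * L ^ (n + 1) := min_le_left _ _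
          _ = L * (θ * L ^ n) := by ring
      · rw [heq]
        refine le_min ?_ (min_le_right _ _)
        calc min (θ * L ^ (n + 1)) ω ≤ ω := min_le_right _ _
          _ ≤ L * ω := le_mul_of_one_le_left hω.le hL1.le
  have hLn : Tendsto (fun n : ℕ => L ^ n) atTop atTop :=
    tendsto_pow_atTop_atTop_of_one_lt hL1
  obtain ⟨n, hn⟩ := (hLn.eventually_ge_atTop (ω / θ)).exists
  have hωn : ω ≤ θ * L ^ n := by
    rw [div_le_iff₀ hθ0] at hn
    linarith [mul_comm θ (L ^ n)]
  obtain ⟨K, hK, hKe⟩ := key n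
  rw [min_eq_right hωn] at hKe
  exact ⟨K, hKe⟩
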